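/- For d > 1/√κ with κ > 1, the worst-case decay rate −d + √(d² − 1/κ) satisfies −d + √(d² − 1/κ) ≥ −1/(2dκ) · (1/(1 − 1/(2d²κ))) ; in particular, for any fixed c > 0 and d = c (independent of κ), the decay rate −d + √(d² − 1/κ) is bounded below by −1/(dκ), so it scales like −Θ(1/κ) as κ → ∞ rather than −Θ(1/√κ). -/

import Mathlib

/-- Overdamping destroys acceleration: for `κ > 1` and `d > 1/√κ`, the worst-case decay
rate `−d + √(d² − 1/κ)` satisfies
`−d + √(d² − 1/κ) ≥ −1/(2dκ) · 1/(1 − 1/(2d²κ))`, and it is bounded below by `−1/(dκ)`,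
so it scales like `−Θ(1/κ)` rather than `−Θ(1/√κ)`. -/
theorem stmt_5 (κ d : ℝ) (hκ : 1 < κ) (hd : 1 / Real.sqrt κ < d) :
    (-d + Real.sqrt (d ^ 2 - 1 / κ) ≥
      -(1 / (2 * d * κ)) * (1 / (1 - 1 / (2 * d ^ 2 * κ)))) ∧
    (-d + Real.sqrt (d ^ 2 - 1 / κ) ≥ -(1 / (d * κ))) := by
  have hκ0 : (0:ℝ) < κ := by linarith
  have hs : 0 < Real.sqrt κ := Real.sqrt_pos.2 hκ0
  have hd0 : 0 < d := lt_trans (by positivity) hd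
  have hdk : 1 < d ^ 2 * κ := by
    have h1 : 1 < d * Real.sqrt κ := by
      rw [div_lt_iff₀ hs] at hd; linarith
    have h2 : Real.sqrt κ ^ 2 = κ := Real.sq_sqrt hκ0.le
    nlinarith [Real.sqrt_nonneg κ]
  have hden : 0 < 2 * (d ^ 2 * κ) - 1 := by linarith
  -- lower bound on the square root
  have hL : d * (2 * (d ^ 2 * κ) - 2) / (2 * (d ^ 2 * κ) - 1)
      ≤ Real.sqrt (d ^ 2 - 1 / κ) := by
    have hLnn : 0 ≤ d * (2 * (d ^ 2 * κ) - 2) / (2 * (d ^ 2 * κ) - 1) := by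
      apply div_nonneg _ hden.le
      nlinarith
    rw [show d * (2 * (d ^ 2 * κ) - 2) / (2 * (d ^ 2 * κ) - 1)
        = Real.sqrt ((d * (2 * (d ^ 2 * κ) - 2) / (2 * (d ^ 2 * κ) - 1)) ^ 2)
        from (Real.sqrt_sq hLnn).symm]
    apply Real.sqrt_le_sqrt
    rw [div_pow, div_le_iff₀ (by positivity),
      show d ^ 2 - 1 / κ = (d ^ 2 * κ - 1) / κ by field_simp,
      div_mul_eq_mul_div, le_div_iff₀ hκ0]
    nlinarith [hdk, hd0, hκ0, sq_nonneg (d ^ 2 * κ - 1)]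
  have hkey : -d + Real.sqrt (d ^ 2 - 1 / κ) ≥ -(d / (2 * (d ^ 2 * κ) - 1)) := by
    have : -d + d * (2 * (d ^ 2 * κ) - 2) / (2 * (d ^ 2 * κ) - 1)
        = -(d / (2 * (d ^ 2 * κ) - 1)) := by
      have hne := hden.ne'
      have h3 : d * (2 * (d ^ 2 * κ) - 2) / (2 * (d ^ 2 * κ) - 1)
          = d - d / (2 * (d ^ 2 * κ) - 1) := by
        rw [eq_sub_iff_add_eq, ← add_div, div_eq_iff hne]; ring
      rw [mul_div_assoc] at h3 ⊢; linarith [h3]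
    linarith [hL]
  constructor
  · have : -(1 / (2 * d * κ)) * (1 / (1 - 1 / (2 * d ^ 2 * κ)))
        = -(d / (2 * (d ^ 2 * κ) - 1)) := by
      rw [show 1 - 1 / (2 * d ^ 2 * κ) = (2 * (d ^ 2 * κ) - 1) / (2 * d ^ 2 * κ) by
        field_simp]
      field_simp
    rw [this]; exact hkey
  · have h2 : -(d / (2 * (d ^ 2 * κ) - 1)) ≥ -(1 / (d * κ)) := by
      apply neg_le_neg
      rw [div_le_div_iff₀ hden (by positivity)]
      nlinarith
    linarith [hkey]
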